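/- Let A be an N×N Hermitian positive definite complex matrix and B_1, …, B_n be N×N Hermitian positive semidefinite complex matrices, and for x ∈ ℝⁿ with x_i ≥ 0 for all i let Σ(x) = (A + Σ_{i=1}^n x_i B_i)⁻¹ and f_M(x) = max_{1≤j≤N} (Σ(x))_{j,j}, the largest diagonal entry of Σ(x). Let x̃ be a point with x̃_i ≥ 0 for all i, let j* be an index achieving the maximum diagonal entry of Σ(x̃), and let e ∈ ℂᴺ be the j*-th standard basis vector. Define g ∈ ℝⁿ by g_i = −e^H Σ(x̃) B_i Σ(x̃) e. Then g is a subgradient of f_M at x̃ over the nonnegative orthant: f_M(x) ≥ f_M(x̃) + ⟨g, x − x̃⟩ for all x with x_i ≥ 0 for all i. -/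

import Mathlib

set_option maxHeartbeats 1000000


open Matrix ComplexOrder in
/-- A subgradient of the M-optimal metric
`f_M(x) = max_j ((A + ∑ i, x i • B i)⁻¹)_{j,j}` at a point `x̃` of the
nonnegative orthant: if `j*` achieves the maximum diagonal entry of `Σ(x̃)` and
`e` is the `j*`-th standard basis vector, then `g` with
`g i = −eᴴ Σ(x̃) B i Σ(x̃) e` is a subgradient of `f_M` at `x̃`. -/
theorem maxDiag_subgradient (N n : ℕ)
    (A : Matrix (Fin N) (Fin N) ℂ) (hA : A.PosDef)
    (B : Fin n → Matrix (Fin N) (Fin N) ℂ) (hB : ∀ i, (B i).PosSemidef)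
    (fM : (Fin n → ℝ) → ℝ)
    (hfM : ∀ x : Fin n → ℝ, fM x =
      ⨆ j : Fin N, (((A + ∑ i, x i • B i)⁻¹) j j).re)
    (xt : Fin n → ℝ) (hxt : ∀ i, 0 ≤ xt i)
    (jstar : Fin N)
    (hjstar : (((A + ∑ j, xt j • B j)⁻¹) jstar jstar).re = fM xt)
    (e : Fin N → ℂ) (he : e = Pi.single jstar 1)
    (g : Fin n → ℝ)
    (hg : ∀ i, g i =
      -(star e ⬝ᵥ
          ((A + ∑ j, xt j • B j)⁻¹ * B i * (A + ∑ j, xt j • B j)⁻¹).mulVec e).re) :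
    ∀ x : Fin n → ℝ, (∀ i, 0 ≤ x i) →
      fM xt + ∑ i, g i * (x i - xt i) ≤ fM x := by
  intro x hx
  -- positive definiteness of the shifted matrices
  have hPD : ∀ y : Fin n → ℝ, (∀ i, 0 ≤ y i) → (A + ∑ i, y i • B i).PosDef := by
    intro y hy
    refine hA.add_posSemidef ?_
    have : ∀ i ∈ Finset.univ, (y i • B i).PosSemidef := by
      intro i _
      refine Matrix.PosSemidef.of_dotProduct_mulVec_nonneg ?_ ?_
      · unfold Matrix.IsHermitian
        rw [conjTranspose_smul]
        simp [(hB i).1.eq]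
      · intro v
        rw [smul_mulVec, dotProduct_smul]
        have := (hB i).dotProduct_mulVec_nonneg v
        have h0 : (0:ℂ) ≤ (y i : ℝ) • (star v ⬝ᵥ (B i) *ᵥ v) := by
          exact smul_nonneg (by exact_mod_cast hy i) this
        exact h0
    -- sum of posSemidef
    classical
    induction (Finset.univ : Finset (Fin n)) using Finset.induction with
    | empty => simpa using Matrix.PosSemidef.zero
    | insert _ _ hnot ih =>
        rename_i a s
        rw [Finset.sum_insert hnot]
        exact (this a (by simp)).add ih
  classical
  set Mt := A + ∑ j, xt j • B j with hMtdef
  set Mx := A + ∑ i, x i • B i with hMxdef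
  have hMt : Mt.PosDef := hPD xt hxt
  have hMx : Mx.PosDef := hPD x hx
  set T := Mt⁻¹ with hTdef
  set S := Mx⁻¹ with hSdef
  have hT : T.PosDef := hMt.inv
  have hS : S.PosDef := hMx.inv
  set D := Mx - Mt with hDdef
  have hDsum : D = ∑ i, (x i - xt i) • B i := by
    rw [hDdef, hMxdef, hMtdef]
    rw [add_sub_add_left_eq_sub, ← Finset.sum_sub_distrib]
    congr 1; ext i
    rw [sub_smul]
  have hD : D.IsHermitian := hMx.isHermitian.sub hMt.isHermitian
  have hMtu : IsUnit Mt.det := hMt.det_pos.ne'.isUnit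
  have hMxu : IsUnit Mx.det := hMx.det_pos.ne'.isUnit
  have hTMt : T * Mt = 1 := Matrix.nonsing_inv_mul _ hMtu
  have hMtT : Mt * T = 1 := Matrix.mul_nonsing_inv _ hMtu
  have hSMx : S * Mx = 1 := Matrix.nonsing_inv_mul _ hMxu
  have hMxS : Mx * S = 1 := Matrix.mul_nonsing_inv _ hMxu
  have hTS : T * D * S = T - S := by
    rw [hDdef, mul_sub, sub_mul, mul_assoc T Mx S, hMxS, mul_one, hTMt, one_mul]
  have hST : S * D * T = T - S := by
    rw [hDdef, mul_sub, sub_mul, hSMx, one_mul, mul_assoc S Mt T, hMtT, mul_one]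
  have key : S - T + T * D * T = T * D * S * D * T := by
    have : T * D * S * D * T = (T - S) * D * T := by rw [hTS]
    rw [this, sub_mul, sub_mul, hST]
    abel
  have hquad : (T * D * S * D * T).PosSemidef := by
    have h1 := hS.posSemidef.conjTranspose_mul_mul_same (D * T)
    have h2 : (D * T)ᴴ = T * D := by
      rw [conjTranspose_mul, hD.eq, hT.isHermitian.eq]
    rw [h2, ← mul_assoc] at h1
    exact h1
  have hpos : (0:ℂ) ≤ star e ⬝ᵥ (T * D * S * D * T) *ᵥ e := hquad.dotProduct_mulVec_nonneg e
  rw [← key] at hpos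
  have hre : 0 ≤ (star e ⬝ᵥ (S - T + T * D * T) *ᵥ e).re := by
    rw [Complex.le_def] at hpos
    simpa using hpos.1
  rw [add_mulVec, sub_mulVec, dotProduct_add, dotProduct_sub, Complex.add_re,
    Complex.sub_re] at hre
  -- diagonal entries
  have hdiag : ∀ M : Matrix (Fin N) (Fin N) ℂ, star e ⬝ᵥ M *ᵥ e = M jstar jstar := by
    intro M
    subst he
    simp [mulVec_single, dotProduct, Pi.single_apply]
  -- the TDT term equals minus the inner product sum
  have hTDT : (star e ⬝ᵥ (T * D * T) *ᵥ e).re = -∑ i, g i * (x i - xt i) := by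
    have expand : T * D * T = ∑ i, (x i - xt i) • (T * B i * T) := by
      rw [hDsum, Finset.mul_sum, Finset.sum_mul]
      congr 1; ext i
      rw [mul_smul_comm, smul_mul_assoc]
    rw [expand, hdiag, Matrix.sum_apply, Complex.re_sum, ← Finset.sum_neg_distrib]
    refine Finset.sum_congr rfl fun i _ => ?_
    rw [hg i, hdiag, Matrix.smul_apply, Complex.real_smul, Complex.mul_re]
    simp
    ring
  have hfx : (S jstar jstar).re ≤ fM x := by
    rw [hfM x]
    exact le_ciSup (f := fun j => (S j j).re) (Set.Finite.bddAbove (Set.finite_range _)) jstar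
  have hft : fM xt = (T jstar jstar).re := hjstar.symm
  rw [hdiag, hdiag, hTDT] at hre
  rw [hft]
  linarith
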